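/- Let H and Ξ be real separable Hilbert spaces, let f : H × Ξ → ℝ be continuous in its first variable (for each fixed second argument) and l-Lipschitz in its second variable (uniformly in the first), and let ζ, ζ' : [0,∞) × H → Ξ be such that for every s ≥ 0 the maps ζ(s,·) and ζ'(s,·) are continuous from H into Ξ equipped with its weak topology. Define Υ : [0,∞) × H → Ξ by Υ(s,x) = [(f(x,ζ(s,x)) − f(x,ζ'(s,x))) / ‖ζ(s,x) − ζ'(s,x)‖²]·(ζ(s,x) − ζ'(s,x)) when ζ(s,x) ≠ ζ'(s,x), and Υ(s,x) = 0 otherwise. Then there exists a doubly indexed family of functions Υ_{m,n} : [0,∞) × H → Ξ (m, n ∈ ℕ) such that: (a) for every m, n and s ≥ 0 the map x ↦ Υ_{m,n}(s,x) is Lipschitz; (b) sup_{m,n} sup_{s ≥ 0} sup_{x ∈ H} ‖Υ_{m,n}(s,x)‖ < ∞; and (c) for every s ≥ 0 and x ∈ H, lim_{n→∞} lim_{m→∞} Υ_{m,n}(s,x) = Υ(s,x). -/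

import Mathlib

open scoped Classical

open Filter Topology RealInnerProductSpace NNReal

/-- inf-convolution approximation of a bounded continuous function by Lipschitz ones. -/
private lemma lipschitz_approx {X : Type*} [MetricSpace X] [Nonempty X]
    (h : X → ℝ) (C : ℝ) (hC : ∀ x, |h x| ≤ C) (hcont : Continuous h) :
    ∃ g : ℕ → X → ℝ, (∀ m : ℕ, LipschitzWith m (g m)) ∧ (∀ m x, |g m x| ≤ C) ∧
      (∀ x, Tendsto (fun m => g m x) atTop (𝓝 (h x))) := by
  set g : ℕ → X → ℝ := fun m x => ⨅ y, (h y + m * dist x y) with hg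
  have hbdd : ∀ (m : ℕ) (x : X), BddBelow (Set.range fun y => h y + m * dist x y) := by
    intro m x
    refine ⟨-C, ?_⟩
    rintro r ⟨y, rfl⟩
    have := (abs_le.1 (hC y)).1
    dsimp only
    nlinarith [dist_nonneg (x := x) (y := y), Nat.cast_nonneg (α := ℝ) m]
  have hle : ∀ m x, g m x ≤ h x := by
    intro m x
    have := ciInf_le (hbdd m x) x
    simpa using this
  have hlb : ∀ m x, -C ≤ g m x := by
    intro m x
    refine le_ciInf fun y => ?_
    have := (abs_le.1 (hC y)).1
    nlinarith [dist_nonneg (x := x) (y := y), Nat.cast_nonneg (α := ℝ) m]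
  refine ⟨g, ?_, ?_, ?_⟩
  · intro m
    rw [lipschitzWith_iff_dist_le_mul]
    have key : ∀ x x' : X, g m x ≤ g m x' + m * dist x x' := by
      intro x x'
      rw [← sub_le_iff_le_add]
      refine le_ciInf fun y => ?_
      rw [sub_le_iff_le_add]
      calc g m x ≤ h y + m * dist x y := ciInf_le (hbdd m x) y
        _ ≤ h y + m * (dist x x' + dist x' y) := by
            have := dist_triangle x x' y
            nlinarith [Nat.cast_nonneg (α := ℝ) m]
        _ = h y + ↑m * dist x' y + ↑m * dist x x' := by ring
    intro x x'
    rw [Real.dist_eq, abs_sub_le_iff]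
    constructor
    · have := key x x'; push_cast; linarith
    · have := key x' x; rw [dist_comm x' x] at this; push_cast; linarith
  · intro m x
    rw [abs_le]
    exact ⟨hlb m x, (hle m x).trans (abs_le.1 (hC x)).2⟩
  · intro x
    have hC0 : 0 ≤ C := (abs_nonneg _).trans (hC x)
    rw [Metric.tendsto_atTop]
    intro ε hε
    obtain ⟨δ, hδ, hball⟩ := Metric.continuousAt_iff.1 hcont.continuousAt (ε/2) (by linarith)
    obtain ⟨M, hM⟩ := exists_nat_ge ((2 * C) / δ)
    refine ⟨M, fun m hm => ?_⟩
    have hmδ : 2 * C ≤ m * δ := by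
      rw [div_le_iff₀ hδ] at hM
      have : (M : ℝ) ≤ m := Nat.cast_le.2 hm
      nlinarith
    have hlow : h x - ε/2 ≤ g m x := by
      refine le_ciInf fun y => ?_
      rcases lt_or_ge (dist y x) δ with hy | hy
      · have := le_of_lt (hball hy)
        rw [Real.dist_eq, abs_le] at this
        have hd : 0 ≤ (m : ℝ) * dist x y := by positivity
        linarith [this.1]
      · have h1 : -C ≤ h y := (abs_le.1 (hC y)).1
        have h2 : h x ≤ C := (abs_le.1 (hC x)).2
        have : (m : ℝ) * δ ≤ m * dist x y := by
          rw [dist_comm]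
          exact mul_le_mul_of_nonneg_left hy (Nat.cast_nonneg m)
        nlinarith
    rw [Real.dist_eq, abs_lt]
    constructor <;> [linarith [hle m x]; linarith [hle m x]]


/-- radial truncation to the ball of radius `R` is 2-Lipschitz. -/
private lemma trunc_lipschitz {E : Type*} [NormedAddCommGroup E] [NormedSpace ℝ E] {R : ℝ}
    (hR : 0 < R) : LipschitzWith 2 (fun v : E => (R / max R ‖v‖) • v) := by
  rw [lipschitzWith_iff_dist_le_mul]
  intro u v
  set a := max R ‖u‖ with ha
  set b := max R ‖v‖ with hb
  have haR : R ≤ a := le_max_left _ _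
  have hbR : R ≤ b := le_max_left _ _
  have ha0 : 0 < a := lt_of_lt_of_le hR haR
  have hb0 : 0 < b := lt_of_lt_of_le hR (le_max_left _ _)
  have hub : ‖u‖ ≤ a := le_max_right _ _
  have hvb : ‖v‖ ≤ b := le_max_right _ _
  have hdecomp : (R / a) • u - (R / b) • v = (R / a) • (u - v) + (R / a - R / b) • v := by
    rw [smul_sub, sub_smul]; abel
  have habs : |a - b| ≤ ‖u - v‖ := by
    have h1 : |max R ‖u‖ - max R ‖v‖| ≤ |‖u‖ - ‖v‖| := by
      rw [max_comm R ‖u‖, max_comm R ‖v‖]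
      exact abs_max_sub_max_le_abs _ _ _
    exact h1.trans (abs_norm_sub_norm_le u v)
  rw [dist_eq_norm, dist_eq_norm, hdecomp]
  have h2 : ‖(R / a) • (u - v)‖ ≤ ‖u - v‖ := by
    rw [norm_smul, Real.norm_eq_abs, abs_of_pos (by positivity)]
    have : R / a ≤ 1 := (div_le_one ha0).2 haR
    nlinarith [norm_nonneg (u - v)]
  have h3 : ‖(R / a - R / b) • v‖ ≤ ‖u - v‖ := by
    rw [norm_smul, Real.norm_eq_abs]
    have he : R / a - R / b = R * (b - a) / (a * b) := by field_simp
    rw [he, abs_div, abs_mul, abs_of_pos hR, abs_of_pos (by positivity : (0:ℝ) < a * b)]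
    calc R * |b - a| / (a * b) * ‖v‖ ≤ R * |b - a| / (a * b) * b := by
          apply mul_le_mul_of_nonneg_left hvb (by positivity)
      _ = (R / a) * |b - a| := by field_simp
      _ ≤ 1 * |b - a| := by
          apply mul_le_mul_of_nonneg_right ((div_le_one ha0).2 haR) (abs_nonneg _)
      _ = |a - b| := by rw [one_mul, abs_sub_comm]
      _ ≤ ‖u - v‖ := habs
  calc ‖(R / a) • (u - v) + (R / a - R / b) • v‖
      ≤ ‖(R / a) • (u - v)‖ + ‖(R / a - R / b) • v‖ := norm_add_le _ _
    _ ≤ ‖u - v‖ + ‖u - v‖ := add_le_add h2 h3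
    _ = 2 * ‖u - v‖ := by ring


private lemma trunc_norm_le {E : Type*} [NormedAddCommGroup E] [NormedSpace ℝ E] {R : ℝ}
    (hR : 0 < R) (v : E) : ‖(R / max R ‖v‖) • v‖ ≤ R := by
  rw [norm_smul, Real.norm_eq_abs]
  have hb0 : 0 < max R ‖v‖ := lt_of_lt_of_le hR (le_max_left _ _)
  rw [abs_of_pos (by positivity)]
  rw [div_mul_eq_mul_div, div_le_iff₀ hb0]
  nlinarith [le_max_right R ‖v‖, norm_nonneg v]


private lemma trunc_eq_self {E : Type*} [NormedAddCommGroup E] [NormedSpace ℝ E] {R : ℝ}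
    (hR : 0 < R) {v : E} (hv : ‖v‖ ≤ R) : (R / max R ‖v‖) • v = v := by
  rw [max_eq_left hv, div_self hR.ne', one_smul]


/-- finite sums of Lipschitz functions are Lipschitz. -/
private lemma lipschitz_sum {X E ι : Type*} [MetricSpace X] [NormedAddCommGroup E]
    (t : Finset ι) (F : ι → X → E) (hF : ∀ i, ∃ K : ℝ≥0, LipschitzWith K (F i)) :
    ∃ K : ℝ≥0, LipschitzWith K fun x => ∑ i ∈ t, F i x := by
  classical
  induction t using Finset.induction_on with
  | empty => exact ⟨0, by simpa [Finset.sum_empty] using LipschitzWith.const (0 : E)⟩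
  | insert _ _ hnot ih =>
    obtain ⟨K₁, h₁⟩ := hF _
    obtain ⟨K₂, h₂⟩ := ih
    exact ⟨K₁ + K₂, by simpa [Finset.sum_insert hnot] using h₁.add h₂⟩

private lemma lipschitz_smul_const {X E : Type*} [MetricSpace X] [NormedAddCommGroup E]
    [NormedSpace ℝ E] {K : ℝ≥0} {g : X → ℝ} (hg : LipschitzWith K g) (c : E) :
    ∃ K' : ℝ≥0, LipschitzWith K' fun x => g x • c := by
  refine ⟨K * ‖c‖₊, LipschitzWith.of_dist_le_mul fun x y => ?_⟩
  rw [dist_eq_norm, ← sub_smul, norm_smul, Real.norm_eq_abs, ← Real.dist_eq]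
  calc |g x - g y| * ‖c‖ = dist (g x) (g y) * ‖c‖ := by rw [Real.dist_eq]
    _ ≤ (K * dist x y) * ‖c‖ := by
        apply mul_le_mul_of_nonneg_right (hg.dist_le_mul x y) (norm_nonneg c)
    _ = ↑(K * ‖c‖₊) * dist x y := by push_cast; ring

/-- Lemma on approximation of the Girsanov-kernel function `Υ` by a uniformly bounded,
doubly indexed family of Lipschitz functions. -/
theorem stmt_0
    {H Ξ : Type*}
    [NormedAddCommGroup H] [InnerProductSpace ℝ H] [CompleteSpace H]
    [TopologicalSpace.SeparableSpace H]
    [NormedAddCommGroup Ξ] [InnerProductSpace ℝ Ξ] [CompleteSpace Ξ]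
    [TopologicalSpace.SeparableSpace Ξ]
    (f : H → Ξ → ℝ) (l : ℝ) (hl : 0 ≤ l)
    (hf_cont : ∀ z : Ξ, Continuous fun x => f x z)
    (hf_lip : ∀ x : H, ∀ z z' : Ξ, |f x z - f x z'| ≤ l * ‖z - z'‖)
    (ζ ζ' : ℝ → H → Ξ)
    (hζ : ∀ s : ℝ, 0 ≤ s → ∀ e : Ξ, Continuous fun x => ⟪ζ s x, e⟫)
    (hζ' : ∀ s : ℝ, 0 ≤ s → ∀ e : Ξ, Continuous fun x => ⟪ζ' s x, e⟫)
    (Υ : ℝ → H → Ξ)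
    (hΥ : ∀ s x, Υ s x =
      if ζ s x ≠ ζ' s x then
        ((f x (ζ s x) - f x (ζ' s x)) / ‖ζ s x - ζ' s x‖ ^ 2) • (ζ s x - ζ' s x)
      else 0) :
    ∃ Υmn : ℕ → ℕ → ℝ → H → Ξ,
      (∀ m n : ℕ, ∀ s : ℝ, 0 ≤ s → ∃ K : ℝ≥0, LipschitzWith K (Υmn m n s)) ∧
      (∃ B : ℝ, ∀ m n : ℕ, ∀ s : ℝ, 0 ≤ s → ∀ x : H, ‖Υmn m n s x‖ ≤ B) ∧
      (∀ s : ℝ, 0 ≤ s → ∀ x : H, ∃ g : ℕ → Ξ,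
        (∀ n : ℕ, Tendsto (fun m => Υmn m n s x) atTop (𝓝 (g n))) ∧
        Tendsto g atTop (𝓝 (Υ s x))) := by
  haveI : Nonempty Ξ := ⟨0⟩
  haveI : Nonempty H := ⟨0⟩
  obtain ⟨u, hu⟩ := TopologicalSpace.exists_dense_seq Ξ
  set U : ℕ → Submodule ℝ Ξ := fun n => Submodule.span ℝ (u '' Set.Iio n) with hUdef
  have hfd : ∀ n, FiniteDimensional ℝ (U n) := fun n =>
    FiniteDimensional.span_of_finite ℝ ((Set.finite_Iio n).image u)
  -- the truncated projections
  have hP : ∀ n : ℕ, ∃ P : Ξ → Ξ,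
      (∀ v, P v ∈ U n) ∧
      (∀ v w, w ∈ U n → ‖v - P v‖ ≤ ‖v - w‖) ∧
      (∀ g : H → Ξ, (∀ e : Ξ, Continuous fun x => ⟪g x, e⟫) → Continuous fun x => P (g x)) ∧
      (∀ w : Ξ, w ∈ U n → P w = w) := by
    intro n
    haveI := hfd n
    refine ⟨fun v => ((U n).orthogonalProjectionOnto v : Ξ), fun v => SetLike.coe_mem _,
      ?_, ?_, ?_⟩
    · intro v w hw
      erw [Submodule.starProjection_minimal (U := U n) v]
      have hbdd : BddBelow (Set.range fun x : U n => ‖v - (x : Ξ)‖) :=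
        ⟨0, by rintro r ⟨y, rfl⟩; positivity⟩
      exact ciInf_le hbdd (⟨w, hw⟩ : U n)
    · intro g hg
      set b := stdOrthonormalBasis ℝ (U n) with hb
      have hform : ∀ w : Ξ,
          ((U n).orthogonalProjectionOnto w : Ξ) = ∑ i, ⟪((b i : Ξ)), w⟫ • (b i : Ξ) := by
        intro w
        rw [b.orthogonalProjectionOnto_apply_eq_sum]
        push_cast
        rfl
      simp only [hform]
      refine continuous_finset_sum _ fun i _ => Continuous.smul ?_ continuous_const
      have := hg (b i : Ξ)
      simpa [real_inner_comm] using this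
    · intro w hw
      exact Submodule.starProjection_eq_self_iff.2 hw
  choose P hPmem hPmin hPcont hPid using hP
  -- pointwise strong convergence of the projections
  have hPtendsto : ∀ v : Ξ, Tendsto (fun n => P n v) atTop (𝓝 v) := by
    intro v
    rw [Metric.tendsto_atTop]
    intro ε hε
    obtain ⟨k, hk⟩ := hu.exists_dist_lt v hε
    refine ⟨k + 1, fun n hn => ?_⟩
    have hmem : u k ∈ U n := Submodule.subset_span ⟨k, by simpa using Nat.lt_of_succ_le hn, rfl⟩
    calc dist (P n v) v = ‖v - P n v‖ := by rw [dist_comm, dist_eq_norm]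
      _ ≤ ‖v - u k‖ := hPmin n v (u k) hmem
      _ = dist v (u k) := (dist_eq_norm v (u k)).symm
      _ < ε := hk
  -- joint continuity of f
  have hfj : Continuous fun p : H × Ξ => f p.1 p.2 := by
    rw [continuous_iff_continuousAt]
    rintro ⟨x₀, z₀⟩
    rw [ContinuousAt, tendsto_iff_dist_tendsto_zero]
    have hbound : ∀ p : H × Ξ,
        dist (f p.1 p.2) (f x₀ z₀) ≤ l * ‖p.2 - z₀‖ + |f p.1 z₀ - f x₀ z₀| := by
      intro p
      calc dist (f p.1 p.2) (f x₀ z₀) ≤ dist (f p.1 p.2) (f p.1 z₀) + dist (f p.1 z₀) (f x₀ z₀) :=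
            dist_triangle _ _ _
        _ ≤ l * ‖p.2 - z₀‖ + |f p.1 z₀ - f x₀ z₀| := by
            rw [Real.dist_eq, Real.dist_eq]
            exact add_le_add (hf_lip p.1 p.2 z₀) le_rfl
    have htend : Tendsto (fun p : H × Ξ => l * ‖p.2 - z₀‖ + |f p.1 z₀ - f x₀ z₀|)
        (𝓝 (x₀, z₀)) (𝓝 0) := by
      have h1 : Tendsto (fun p : H × Ξ => l * ‖p.2 - z₀‖) (𝓝 (x₀, z₀)) (𝓝 (l * ‖z₀ - z₀‖)) :=
        (tendsto_const_nhds.mul ((continuous_snd.sub continuous_const).norm.tendsto _))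
      have h2 : Tendsto (fun p : H × Ξ => |f p.1 z₀ - f x₀ z₀|) (𝓝 (x₀, z₀))
          (𝓝 |f x₀ z₀ - f x₀ z₀|) :=
        (((hf_cont z₀).comp continuous_fst).sub continuous_const).abs.tendsto _
      have := h1.add h2
      simpa using this
    exact squeeze_zero (fun p => dist_nonneg) hbound htend
  -- continuity of f x in the second variable
  have hfx_cont : ∀ x : H, Continuous (f x) := by
    intro x
    have : LipschitzWith l.toNNReal (f x) := by
      apply LipschitzWith.of_dist_le_mul
      intro z z'
      rw [Real.dist_eq, dist_eq_norm, Real.coe_toNNReal l hl]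
      exact hf_lip x z z'
    exact this.continuous
  -- the intermediate approximation
  set A : ℕ → ℝ → H → ℝ := fun n s x => f x (P n (ζ s x)) - f x (P n (ζ' s x)) with hAdef
  set V : ℕ → ℝ → H → Ξ := fun n s x => P n (ζ s x) - P n (ζ' s x) with hVdef
  set Υn : ℕ → ℝ → H → Ξ :=
    fun n s x => (A n s x / (‖V n s x‖ ^ 2 + 1 / (n + 1))) • V n s x with hΥndef
  have hden : ∀ (n : ℕ) (s : ℝ) (x : H), 0 < ‖V n s x‖ ^ 2 + 1 / ((n : ℝ) + 1) := by
    intro n s x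
    positivity
  have hA_le : ∀ n s x, |A n s x| ≤ l * ‖V n s x‖ := fun n s x =>
    hf_lip x (P n (ζ s x)) (P n (ζ' s x))
  have hΥn_norm : ∀ n s x, ‖Υn n s x‖ ≤ l := by
    intro n s x
    simp only [hΥndef]
    rw [norm_smul, Real.norm_eq_abs, abs_div, abs_of_pos (hden n s x), div_mul_eq_mul_div,
      div_le_iff₀ (hden n s x)]
    have h1 := hA_le n s x
    have h2 : (0:ℝ) < 1 / ((n : ℝ) + 1) := by positivity
    nlinarith [norm_nonneg (V n s x), abs_nonneg (A n s x)]
  have hΥn_cont : ∀ (n : ℕ) (s : ℝ), 0 ≤ s → Continuous (Υn n s) := by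
    intro n s hs
    have hζc : Continuous fun x => P n (ζ s x) := hPcont n (ζ s) (hζ s hs)
    have hζ'c : Continuous fun x => P n (ζ' s x) := hPcont n (ζ' s) (hζ' s hs)
    have hVc : Continuous (V n s) := hζc.sub hζ'c
    have hAc : Continuous (A n s) := by
      have h1 : Continuous fun x => f x (P n (ζ s x)) :=
        hfj.comp (continuous_id.prodMk hζc)
      have h2 : Continuous fun x => f x (P n (ζ' s x)) :=
        hfj.comp (continuous_id.prodMk hζ'c)
      exact h1.sub h2
    exact ((hAc.div ((hVc.norm.pow 2).add continuous_const)
      fun x => (hden n s x).ne')).smul hVc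
  have hΥn_mem : ∀ n s x, Υn n s x ∈ U n := fun n s x =>
    Submodule.smul_mem _ _ (Submodule.sub_mem _ (hPmem n _) (hPmem n _))
  have hΥn_tendsto : ∀ (s : ℝ), 0 ≤ s → ∀ x, Tendsto (fun n => Υn n s x) atTop (𝓝 (Υ s x)) := by
    intro s hs x
    by_cases hzz : ζ s x = ζ' s x
    · have hV0 : ∀ n, V n s x = 0 := by
        intro n; simp only [hVdef]; rw [hzz, sub_self]
      have hΥ0 : ∀ n, Υn n s x = 0 := by
        intro n; simp only [hΥndef]; rw [hV0 n, smul_zero]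
      have : Υ s x = 0 := by rw [hΥ s x, if_neg (by simpa using hzz)]
      rw [this]
      simp only [hΥ0]
      exact tendsto_const_nhds
    · have hv : ζ s x - ζ' s x ≠ 0 := sub_ne_zero.2 hzz
      have hV : Tendsto (fun n => V n s x) atTop (𝓝 (ζ s x - ζ' s x)) :=
        (hPtendsto (ζ s x)).sub (hPtendsto (ζ' s x))
      have hA : Tendsto (fun n => A n s x) atTop (𝓝 (f x (ζ s x) - f x (ζ' s x))) :=
        (((hfx_cont x).tendsto _).comp (hPtendsto (ζ s x))).sub
          (((hfx_cont x).tendsto _).comp (hPtendsto (ζ' s x)))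
      have hD : Tendsto (fun n : ℕ => ‖V n s x‖ ^ 2 + 1 / ((n : ℝ) + 1)) atTop
          (𝓝 (‖ζ s x - ζ' s x‖ ^ 2)) := by
        have := ((hV.norm.pow 2).add tendsto_one_div_add_atTop_nhds_zero_nat)
        simpa using this
      have hne : ‖ζ s x - ζ' s x‖ ^ 2 ≠ 0 := pow_ne_zero 2 (norm_ne_zero_iff.2 hv)
      have := (hA.div hD hne).smul hV
      rw [hΥ s x, if_pos hzz]
      exact this
  -- the Lipschitz approximations for each fixed n, s
  have key : ∀ (n : ℕ) (s : ℝ), ∃ F : ℕ → H → Ξ,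
      0 ≤ s → (∀ m, ∃ K : ℝ≥0, LipschitzWith K (F m)) ∧ (∀ m x, ‖F m x‖ ≤ l + 1) ∧
        (∀ x, Tendsto (fun m => F m x) atTop (𝓝 (Υn n s x))) := by
    intro n s
    by_cases hs : 0 ≤ s
    swap
    · exact ⟨fun _ _ => 0, fun h => absurd h hs⟩
    haveI := hfd n
    set b := stdOrthonormalBasis ℝ (U n) with hb
    have hR : (0:ℝ) < l + 1 := by linarith
    have hcoord : ∀ i, ∃ g : ℕ → H → ℝ, (∀ m : ℕ, LipschitzWith m (g m)) ∧
        (∀ m x, |g m x| ≤ l) ∧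
        ∀ x, Tendsto (fun m => g m x) atTop (𝓝 ⟪((b i : Ξ)), Υn n s x⟫) := by
      intro i
      apply lipschitz_approx _ l
      · intro x
        have h1 : |⟪((b i : Ξ)), Υn n s x⟫| ≤ ‖(b i : Ξ)‖ * ‖Υn n s x‖ :=
          abs_real_inner_le_norm _ _
        have h2 : ‖(b i : Ξ)‖ = 1 := by
          have := b.orthonormal.1 i
          exact (Submodule.norm_coe _).trans this
        rw [h2, one_mul] at h1
        exact h1.trans (hΥn_norm n s x)
      · exact Continuous.inner continuous_const (hΥn_cont n s hs)
    choose g hg1 hg2 hg3 using hcoord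
    set S : ℕ → H → Ξ := fun m x => ∑ i, g i m x • (b i : Ξ) with hS
    refine ⟨fun m x => ((l+1) / max (l+1) ‖S m x‖) • S m x, fun _ => ⟨?_, ?_, ?_⟩⟩
    · intro m
      obtain ⟨K, hK⟩ := lipschitz_sum Finset.univ (fun i x => g i m x • (b i : Ξ))
        (fun i => lipschitz_smul_const (hg1 i m) _)
      exact ⟨2 * K, (trunc_lipschitz hR).comp hK⟩
    · intro m x
      exact trunc_norm_le hR _
    · intro x
      have hSx : Tendsto (fun m => S m x) atTop (𝓝 (∑ i, ⟪((b i : Ξ)), Υn n s x⟫ • (b i : Ξ))) := by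
        apply tendsto_finset_sum
        intro i _
        exact (hg3 i x).smul_const _
      have hTeq : (∑ i, ⟪((b i : Ξ)), Υn n s x⟫ • (b i : Ξ)) = Υn n s x := by
        have hform : ((U n).orthogonalProjectionOnto (Υn n s x) : Ξ) =
            ∑ i, ⟪((b i : Ξ)), Υn n s x⟫ • (b i : Ξ) := by
          rw [b.orthogonalProjectionOnto_apply_eq_sum]
          push_cast
          rfl
        rw [← hform]
        exact Submodule.starProjection_eq_self_iff.2 (hΥn_mem n s x)
      have htrunc : Tendsto (fun m => ((l+1) / max (l+1) ‖S m x‖) • S m x) atTop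
          (𝓝 (((l+1) / max (l+1) ‖Υn n s x‖) • Υn n s x)) := by
        have hcont : Continuous fun v : Ξ => ((l+1) / max (l+1) ‖v‖) • v :=
          (trunc_lipschitz hR).continuous
        have := (hcont.tendsto _).comp hSx
        rw [hTeq] at this
        exact this
      rw [trunc_eq_self hR ((hΥn_norm n s x).trans (by linarith))] at htrunc
      exact htrunc
  choose F hF using key
  refine ⟨fun m n s => F n s m, ?_, ⟨l + 1, ?_⟩, ?_⟩
  · intro m n s hs
    exact (hF n s hs).1 m
  · intro m n s hs x
    exact (hF n s hs).2.1 m x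
  · intro s hs x
    exact ⟨fun n => Υn n s x, fun n => (hF n s hs).2.2 x, hΥn_tendsto s hs x⟩
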